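/- Sufficiency direction of Theorem 1: Let π be a probability distribution on {1,…,K} with π(z) > 0 for all z; for each z let p_z be a probability distribution on {0,1} × {0,1} (interpreted as the conditional law of (X,Y) given Z = z); and let q be a probability distribution on {0,1} × {0,1} (interpreted as the law of (Y(x_0), Y(x_1))). Suppose for all z ∈ {1,…,K}, all i, y, ỹ ∈ {0,1}: (1) the q-marginal satisfies q(Y(x_i) = y) ≤ p_z(X = i, Y = y) + p_z(X = 1−i), and (2) q(y, ỹ) ≤ p_z(X = 0, Y = y) + p_z(X = 1, Y = ỹ). Then there exists a probability space carrying random variables Z : Ω → {1,…,K}, X(z) : Ω → {0,1} for each z, and Y(x_0), Y(x_1) : Ω → {0,1}, such that Z has law π, Z is independent of (Y(x_0), Y(x_1), X(z_1),…,X(z_K)), the observed variables X = X(Z) and Y = Y(X) satisfy P(X = x, Y = y | Z = z) = p_z(x, y) for all x, y, z, and (Y(x_0), Y(x_1)) has law q. -/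

import Mathlib

open MeasureTheory ProbabilityTheory

/-- A binary instrumental-variable model with instrument law `π` and observed conditional
laws `p z x y = P(X = x, Y = y | Z = z)`, satisfying assumption (i): joint independence of
`Z` from `(Y(x₀), Y(x₁), X(z₁), …, X(z_K))`.  The observed treatment is `X = X(Z)` and the
observed outcome is `Y = Y(X)`. -/
structure IVModel (K : ℕ) (π : Fin K → ℝ) (p : Fin K → Fin 2 → Fin 2 → ℝ) where
  (Ω : Type)
  [m : MeasurableSpace Ω]
  (P : Measure Ω)
  prob : IsProbabilityMeasure P
  Z : Ω → Fin K
  Xz : Fin K → Ω → Fin 2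
  Y0 : Ω → Fin 2
  Y1 : Ω → Fin 2
  hZ : Measurable Z
  hXz : ∀ z, Measurable (Xz z)
  hY0 : Measurable Y0
  hY1 : Measurable Y1
  indep : IndepFun Z (fun ω => (Y0 ω, Y1 ω, fun z => Xz z ω)) P
  law_Z : ∀ z, (P (Z ⁻¹' {z})).toReal = π z
  law_cond : ∀ (z : Fin K) (x y : Fin 2),
    (P[|Z ⁻¹' {z}] {ω | Xz (Z ω) ω = x ∧
      (if Xz (Z ω) ω = 0 then Y0 ω else Y1 ω) = y}).toReal = p z x y

section helpers

lemma feas (p00 p01 p10 p11 q00 q01 q10 q11 : ℝ)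
    (hp0 : 0 ≤ p00) (hp1 : 0 ≤ p01) (hp2 : 0 ≤ p10) (hp3 : 0 ≤ p11)
    (hq0 : 0 ≤ q00) (hq1 : 0 ≤ q01) (hq2 : 0 ≤ q10) (hq3 : 0 ≤ q11)
    (hps : p00 + p01 + (p10 + p11) = 1) (hqs : q00 + q01 + (q10 + q11) = 1)
    (hj00 : q00 ≤ p00 + p10) (hj01 : q01 ≤ p00 + p11)
    (hj10 : q10 ≤ p01 + p10) (hj11 : q11 ≤ p01 + p11)
    (hm00 : q00 + q01 ≤ p00 + (p10 + p11)) (hm01 : q10 + q11 ≤ p01 + (p10 + p11))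
    (hm10 : q00 + q10 ≤ p10 + (p00 + p01)) (hm11 : q01 + q11 ≤ p11 + (p00 + p01)) :
    ∃ a00 a01 a10 a11 : ℝ,
      (0 ≤ a00 ∧ a00 ≤ q00) ∧ (0 ≤ a01 ∧ a01 ≤ q01) ∧
      (0 ≤ a10 ∧ a10 ≤ q10) ∧ (0 ≤ a11 ∧ a11 ≤ q11) ∧
      a00 + a01 = p00 ∧ a10 + a11 = p01 ∧
      (q00 - a00) + (q10 - a10) = p10 ∧ (q01 - a01) + (q11 - a11) = p11 := by
  set c0 : ℝ := q00 + q10 - p10 with hc0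
  set S : ℝ := p00 + p01 with hS
  set t : ℝ := max (max 0 (p00 - q01)) (max (c0 - q10) (p00 + c0 - S)) with ht
  have l1 : (0:ℝ) ≤ t := le_trans (le_max_left _ _) (le_max_left _ _)
  have l2 : p00 - q01 ≤ t := le_trans (le_max_right _ _) (le_max_left _ _)
  have l3 : c0 - q10 ≤ t := le_trans (le_max_left _ _) (le_max_right _ _)
  have l4 : p00 + c0 - S ≤ t := le_trans (le_max_right _ _) (le_max_right _ _)
  have u1 : t ≤ q00 := by apply max_le <;> apply max_le <;> linarith
  have u2 : t ≤ p00 := by apply max_le <;> apply max_le <;> linarith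
  have u3 : t ≤ c0 := by apply max_le <;> apply max_le <;> linarith
  have u4 : t ≤ p00 + c0 - S + q11 := by apply max_le <;> apply max_le <;> linarith
  exact ⟨t, p00 - t, c0 - t, p01 - c0 + t,
    ⟨l1, u1⟩, ⟨by linarith, by linarith⟩, ⟨by linarith, by linarith⟩,
    ⟨by linarith, by linarith⟩, by ring, by ring, by linarith, by linarith⟩

lemma discApply {α : Type*} [Fintype α] [DecidableEq α] [MeasurableSpace α]
    [MeasurableSingletonClass α]
    (c : α → ℝ) (hc : ∀ i, 0 ≤ c i) (s : Set α) [DecidablePred (· ∈ s)] :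
    ((∑ i, ENNReal.ofReal (c i) • Measure.dirac i : Measure α)) s
      = ENNReal.ofReal (∑ i, if i ∈ s then c i else 0) := by
  have hs : MeasurableSet s := (Set.to_countable s).measurableSet
  rw [Measure.finset_sum_apply,
    ENNReal.ofReal_sum_of_nonneg (fun i _ => by split_ifs; exacts [hc i, le_rfl])]
  refine Finset.sum_congr rfl fun i _ => ?_
  rw [Measure.smul_apply, Measure.dirac_apply' _ hs]
  by_cases h : i ∈ s <;> simp [Set.indicator, h]

lemma sum_prod_fn {K : ℕ} (h : Fin K → Fin 2 → ℝ) :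
    ∑ f : Fin K → Fin 2, ∏ z, h z (f z) = ∏ z, (h z 0 + h z 1) := by
  rw [← Fintype.prod_sum]
  simp [Fin.sum_univ_two]

end helpers

set_option maxHeartbeats 1000000 in
/-- sufficiency direction of Theorem 1: if `π` is a positive probability
distribution on `{1,…,K}`, each `p z` is a probability distribution on `{0,1}²`
(candidate conditional law of `(X,Y)` given `Z = z`), `q` is a probability distribution on
`{0,1}²` (candidate law of `(Y(x₀), Y(x₁))`), and for all `z, i, y, ỹ` the inequalities
`q(Y(xᵢ) = y) ≤ p_z(X = i, Y = y) + p_z(X = 1−i)` and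
`q(y, ỹ) ≤ p_z(X = 0, Y = y) + p_z(X = 1, Y = ỹ)` hold, then there is a probability space
carrying `Z, X(z₁),…,X(z_K), Y(x₀), Y(x₁)` with `Z ∼ π`, `Z` jointly independent of the
potential outcomes, observed conditional laws `p`, and `(Y(x₀), Y(x₁)) ∼ q`. -/
theorem stmt5 (K : ℕ) (hK : 1 ≤ K)
    (π : Fin K → ℝ) (hπpos : ∀ z, 0 < π z) (hπsum : ∑ z, π z = 1)
    (p : Fin K → Fin 2 → Fin 2 → ℝ)
    (hpnonneg : ∀ z x y, 0 ≤ p z x y) (hpsum : ∀ z, ∑ x, ∑ y, p z x y = 1)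
    (q : Fin 2 → Fin 2 → ℝ)
    (hqnonneg : ∀ y0 y1, 0 ≤ q y0 y1) (hqsum : ∑ y0, ∑ y1, q y0 y1 = 1)
    (hmarg : ∀ (z : Fin K) (i y : Fin 2),
      (∑ t, if i = 0 then q y t else q t y) ≤ p z i y + ∑ t, p z (1 - i) t)
    (hjoint : ∀ (z : Fin K) (y ytilde : Fin 2),
      q y ytilde ≤ p z 0 y + p z 1 ytilde) :
    ∃ M : IVModel K π p, ∀ y0 y1 : Fin 2,
      (M.P {ω | M.Y0 ω = y0 ∧ M.Y1 ω = y1}).toReal = q y0 y1 := by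
  classical
  -- Scalar forms of the hypotheses
  have hqs : q 0 0 + q 0 1 + (q 1 0 + q 1 1) = 1 := by
    simpa [Fin.sum_univ_two] using hqsum
  have hps : ∀ z, p z 0 0 + p z 0 1 + (p z 1 0 + p z 1 1) = 1 := fun z => by
    simpa [Fin.sum_univ_two] using hpsum z
  have hm0 : ∀ z y0, (∑ t, q y0 t) ≤ p z 0 y0 + ∑ t, p z 1 t := by
    intro z y0
    have := hmarg z 0 y0
    simpa [show (1 : Fin 2) - 0 = 1 from rfl] using this
  have hm1 : ∀ z y1, (∑ t, q t y1) ≤ p z 1 y1 + ∑ t, p z 0 t := by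
    intro z y1
    have := hmarg z 1 y1
    simpa [show (1 : Fin 2) - 1 = 0 from rfl, show (1 : Fin 2) ≠ 0 by decide] using this
  -- Step 1: feasible couplings per z
  have hfeas : ∀ z, ∃ a00 a01 a10 a11 : ℝ,
      (0 ≤ a00 ∧ a00 ≤ q 0 0) ∧ (0 ≤ a01 ∧ a01 ≤ q 0 1) ∧
      (0 ≤ a10 ∧ a10 ≤ q 1 0) ∧ (0 ≤ a11 ∧ a11 ≤ q 1 1) ∧
      a00 + a01 = p z 0 0 ∧ a10 + a11 = p z 0 1 ∧
      (q 0 0 - a00) + (q 1 0 - a10) = p z 1 0 ∧ (q 0 1 - a01) + (q 1 1 - a11) = p z 1 1 := by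
    intro z
    refine feas (p z 0 0) (p z 0 1) (p z 1 0) (p z 1 1) (q 0 0) (q 0 1) (q 1 0) (q 1 1)
      (hpnonneg z 0 0) (hpnonneg z 0 1) (hpnonneg z 1 0) (hpnonneg z 1 1)
      (hqnonneg 0 0) (hqnonneg 0 1) (hqnonneg 1 0) (hqnonneg 1 1)
      (hps z) hqs (hjoint z 0 0) (hjoint z 0 1) (hjoint z 1 0) (hjoint z 1 1)
      ?_ ?_ ?_ ?_
    · simpa [Fin.sum_univ_two] using hm0 z 0
    · simpa [Fin.sum_univ_two] using hm0 z 1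
    · simpa [Fin.sum_univ_two] using hm1 z 0
    · simpa [Fin.sum_univ_two] using hm1 z 1
  choose a00 a01 a10 a11 hb00 hb01 hb10 hb11 hrow0 hrow1 hcol0 hcol1 using hfeas
  set a : Fin K → Fin 2 → Fin 2 → ℝ := fun z i j =>
    if i = 0 then (if j = 0 then a00 z else a01 z) else (if j = 0 then a10 z else a11 z)
    with ha_def
  have ha_nonneg : ∀ z i j, 0 ≤ a z i j := by
    intro z i j
    fin_cases i <;> fin_cases j <;>
      simp [ha_def] <;>
      first
        | exact (hb00 z).1 | exact (hb01 z).1 | exact (hb10 z).1 | exact (hb11 z).1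
  have ha_le : ∀ z i j, a z i j ≤ q i j := by
    intro z i j
    fin_cases i <;> fin_cases j <;>
      simp [ha_def] <;>
      first
        | exact (hb00 z).2 | exact (hb01 z).2 | exact (hb10 z).2 | exact (hb11 z).2
  -- conditional kernels
  set g : Fin K → Fin 2 → Fin 2 → Fin 2 → ℝ := fun z y0 y1 x =>
    if q y0 y1 = 0 then (if x = 0 then 1 else 0)
    else (if x = 0 then a z y0 y1 else q y0 y1 - a z y0 y1) / q y0 y1
    with hg_def
  have hg_nonneg : ∀ z y0 y1 x, 0 ≤ g z y0 y1 x := by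
    intro z y0 y1 x
    by_cases hq : q y0 y1 = 0
    · simp only [hg_def, hq, if_true]
      split_ifs <;> norm_num
    · simp only [hg_def, hq, if_false]
      apply div_nonneg _ (hqnonneg y0 y1)
      split_ifs
      · exact ha_nonneg z y0 y1
      · linarith [ha_le z y0 y1]
  have hg_sum : ∀ z y0 y1, g z y0 y1 0 + g z y0 y1 1 = 1 := by
    intro z y0 y1
    by_cases hq : q y0 y1 = 0
    · simp [hg_def, hq]
    · have h0 : g z y0 y1 0 = a z y0 y1 / q y0 y1 := by simp [hg_def, hq]
      have h1 : g z y0 y1 1 = (q y0 y1 - a z y0 y1) / q y0 y1 := by simp [hg_def, hq]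
      rw [h0, h1, ← add_div,
        show a z y0 y1 + (q y0 y1 - a z y0 y1) = q y0 y1 by ring, div_self hq]
  have hqg : ∀ z y0 y1 x, q y0 y1 * g z y0 y1 x
      = (if x = 0 then a z y0 y1 else q y0 y1 - a z y0 y1) := by
    intro z y0 y1 x
    by_cases hq : q y0 y1 = 0
    · have ha0 : a z y0 y1 = 0 := le_antisymm (by rw [← hq]; exact ha_le z y0 y1)
        (ha_nonneg z y0 y1)
      simp [hg_def, hq, ha0]
    · simp only [hg_def, hq, if_false]
      rw [mul_comm, div_mul_cancel₀ _ hq]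
  -- the weight function on W
  set dR : Fin 2 × Fin 2 × (Fin K → Fin 2) → ℝ := fun w =>
    q w.1 w.2.1 * ∏ z, g z w.1 w.2.1 (w.2.2 z) with hdR_def
  have hdR_nonneg : ∀ w, 0 ≤ dR w := fun w =>
    mul_nonneg (hqnonneg _ _) (Finset.prod_nonneg fun z _ => hg_nonneg z _ _ _)
  have hinner : ∀ y0 y1 : Fin 2, ∑ f : Fin K → Fin 2, ∏ z, g z y0 y1 (f z) = 1 := by
    intro y0 y1
    rw [sum_prod_fn]
    exact Finset.prod_eq_one fun z _ => hg_sum z y0 y1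
  have hsumf : ∀ y0 y1 : Fin 2, ∑ f : Fin K → Fin 2, dR (y0, y1, f) = q y0 y1 := by
    intro y0 y1
    simp only [hdR_def]
    rw [← Finset.mul_sum, hinner, mul_one]
  have hT1 : ∑ w : Fin 2 × Fin 2 × (Fin K → Fin 2), dR w = 1 := by
    rw [Fintype.sum_prod_type]
    have : ∀ y0 : Fin 2, ∑ w : Fin 2 × (Fin K → Fin 2), dR (y0, w)
        = ∑ y1 : Fin 2, q y0 y1 := by
      intro y0
      rw [Fintype.sum_prod_type]
      exact Finset.sum_congr rfl fun y1 _ => hsumf y0 y1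
    rw [Finset.sum_congr rfl fun y0 _ => this y0]
    simpa [Fin.sum_univ_two] using hqs
  -- marginal of (Y0, Y1)
  have hT2 : ∀ y0 y1 : Fin 2, (∑ w : Fin 2 × Fin 2 × (Fin K → Fin 2),
      if w.1 = y0 ∧ w.2.1 = y1 then dR w else 0) = q y0 y1 := by
    intro y0 y1
    rw [Fintype.sum_prod_type]
    have h1 : ∀ y0' : Fin 2, ∑ w : Fin 2 × (Fin K → Fin 2),
        (if y0' = y0 ∧ w.1 = y1 then dR (y0', w) else 0)
        = if y0' = y0 then q y0' y1 else 0 := by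
      intro y0'
      rw [Fintype.sum_prod_type]
      by_cases h : y0' = y0
      · simp only [h, true_and]
        have : ∀ y1' : Fin 2, ∑ f : Fin K → Fin 2,
            (if y1' = y1 then dR (y0, y1', f) else 0)
            = if y1' = y1 then q y0 y1' else 0 := by
          intro y1'
          by_cases h2 : y1' = y1
          · simp only [h2, if_true]; exact hsumf y0 y1
          · simp [h2]
        rw [Finset.sum_congr rfl fun y1' _ => this y1']
        simp [Finset.sum_ite_eq']
      · simp [h]
    rw [Finset.sum_congr rfl fun y0' _ => h1 y0']
    simp [Finset.sum_ite_eq']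
  -- the conditional-law sums
  have hinner2 : ∀ (z : Fin K) (y0 y1 x : Fin 2), ∑ f : Fin K → Fin 2,
      (if f z = x then ∏ z', g z' y0 y1 (f z') else 0) = g z y0 y1 x := by
    intro z y0 y1 x
    have step : ∀ f : Fin K → Fin 2, (if f z = x then ∏ z', g z' y0 y1 (f z') else 0)
        = ∏ z', ((if z' = z then (if f z' = x then (1:ℝ) else 0) else 1)
            * g z' y0 y1 (f z')) := by
      intro f
      rw [Finset.prod_mul_distrib, Finset.prod_ite_eq' Finset.univ z
        (fun z' => if f z' = x then (1:ℝ) else 0), if_pos (Finset.mem_univ z)]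
      by_cases h : f z = x <;> simp [h]
    calc (∑ f : Fin K → Fin 2, if f z = x then ∏ z', g z' y0 y1 (f z') else 0)
        = ∑ f : Fin K → Fin 2, ∏ z', ((if z' = z then (if f z' = x then (1:ℝ) else 0) else 1)
            * g z' y0 y1 (f z')) := Finset.sum_congr rfl fun f _ => step f
      _ = ∏ z', ((if z' = z then (if (0 : Fin 2) = x then (1:ℝ) else 0) else 1) * g z' y0 y1 0
            + (if z' = z then (if (1 : Fin 2) = x then (1:ℝ) else 0) else 1) * g z' y0 y1 1) :=
          sum_prod_fn (fun z' x' =>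
            (if z' = z then (if x' = x then (1:ℝ) else 0) else 1) * g z' y0 y1 x')
      _ = g z y0 y1 x := by
          rw [Finset.prod_eq_single z ?side1 ?side2]
          · fin_cases x <;> simp
          case side1 =>
            intro b _ hb
            simp [hb, hg_sum b y0 y1]
          case side2 =>
            intro h; exact absurd (Finset.mem_univ z) h
  have hT3 : ∀ (z : Fin K) (x y : Fin 2), (∑ w : Fin 2 × Fin 2 × (Fin K → Fin 2),
      if w.2.2 z = x ∧ (if x = 0 then w.1 else w.2.1) = y then dR w else 0) = p z x y := by
    intro z x y
    rw [Fintype.sum_prod_type]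
    have h1 : ∀ y0 : Fin 2, ∑ w : Fin 2 × (Fin K → Fin 2),
        (if w.2 z = x ∧ (if x = 0 then y0 else w.1) = y then dR (y0, w) else 0)
        = ∑ y1 : Fin 2, if (if x = 0 then y0 else y1) = y
            then (if x = 0 then a z y0 y1 else q y0 y1 - a z y0 y1) else 0 := by
      intro y0
      rw [Fintype.sum_prod_type]
      refine Finset.sum_congr rfl fun y1 _ => ?_
      by_cases hB : (if x = 0 then y0 else y1) = y
      · simp only [hB, and_true, if_true]
        rw [← hqg z y0 y1 x, ← hinner2 z y0 y1 x, Finset.mul_sum]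
        refine Finset.sum_congr rfl fun f _ => ?_
        by_cases h : f z = x <;> simp [h, hdR_def]
      · simp [hB]
    rw [Finset.sum_congr rfl fun y0 _ => h1 y0]
    fin_cases x <;> fin_cases y <;>
      simp [Fin.sum_univ_two, ha_def] <;>
      linarith [hrow0 z, hrow1 z, hcol0 z, hcol1 z]
  -- the measures
  set ν : Measure (Fin 2 × Fin 2 × (Fin K → Fin 2)) :=
    ∑ w, ENNReal.ofReal (dR w) • Measure.dirac w with hν_def
  set μπ : Measure (Fin K) := ∑ z, ENNReal.ofReal (π z) • Measure.dirac z with hμ_def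
  have hν_apply : ∀ s : Set (Fin 2 × Fin 2 × (Fin K → Fin 2)),
      ν s = ENNReal.ofReal (∑ w, if w ∈ s then dR w else 0) := fun s =>
    discApply dR hdR_nonneg s
  have hμ_apply : ∀ s : Set (Fin K),
      μπ s = ENNReal.ofReal (∑ z, if z ∈ s then π z else 0) := fun s =>
    discApply π (fun z => (hπpos z).le) s
  haveI hνprob : IsProbabilityMeasure ν := ⟨by
    rw [hν_apply]; simp only [Set.mem_univ, if_true]; rw [hT1]; exact ENNReal.ofReal_one⟩
  haveI hμprob : IsProbabilityMeasure μπ := ⟨by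
    rw [hμ_apply]; simp only [Set.mem_univ, if_true]; rw [hπsum]; exact ENNReal.ofReal_one⟩
  set P : Measure (Fin K × (Fin 2 × Fin 2 × (Fin K → Fin 2))) := μπ.prod ν with hP_def
  haveI hPprob : IsProbabilityMeasure P := by rw [hP_def]; infer_instance
  have hμ_single : ∀ z : Fin K, μπ {z} = ENNReal.ofReal (π z) := by
    intro z
    rw [hμ_apply]
    simp [Set.mem_singleton_iff, Finset.sum_ite_eq']
  have hPz : ∀ z, P (Prod.fst ⁻¹' {z}) = ENNReal.ofReal (π z) := by
    intro z
    rw [hP_def, ← Set.prod_univ, Measure.prod_prod, hμ_single, measure_univ, mul_one]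
  have hindep : IndepFun (Prod.fst) (Prod.snd) P := by
    rw [indepFun_iff_measure_inter_preimage_eq_mul]
    intro s t hs ht
    rw [← Set.prod_eq, hP_def, Measure.prod_prod, ← Set.prod_univ, ← Set.univ_prod,
      Measure.prod_prod, Measure.prod_prod, measure_univ, measure_univ, mul_one, one_mul]
  refine ⟨IVModel.mk (Fin K × (Fin 2 × Fin 2 × (Fin K → Fin 2))) P hPprob
    Prod.fst (fun z ω => ω.2.2.2 z) (fun ω => ω.2.1) (fun ω => ω.2.2.1)
    (measurable_of_countable _) (fun z => measurable_of_countable _)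
    (measurable_of_countable _) (measurable_of_countable _) hindep ?_ ?_, ?_⟩
  · intro z
    rw [hPz z]
    exact ENNReal.toReal_ofReal (hπpos z).le
  · intro z x y
    have hms : MeasurableSet (Prod.fst ⁻¹' {z} :
        Set (Fin K × (Fin 2 × Fin 2 × (Fin K → Fin 2)))) := (Set.to_countable _).measurableSet
    rw [cond_apply hms]
    have hset : (Prod.fst ⁻¹' {z} : Set (Fin K × (Fin 2 × Fin 2 × (Fin K → Fin 2)))) ∩
        {ω | ω.2.2.2 ω.1 = x ∧ (if ω.2.2.2 ω.1 = 0 then ω.2.1 else ω.2.2.1) = y}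
        = {z} ×ˢ {w | w.2.2 z = x ∧ (if x = 0 then w.1 else w.2.1) = y} := by
      ext ω
      simp only [Set.mem_inter_iff, Set.mem_preimage, Set.mem_singleton_iff, Set.mem_setOf_eq,
        Set.mem_prod]
      constructor
      · rintro ⟨rfl, h1, h2⟩
        exact ⟨rfl, h1, by rwa [h1] at h2⟩
      · rintro ⟨rfl, h1, h2⟩
        exact ⟨rfl, h1, by rwa [h1]⟩
    rw [hset, hPz z, hP_def, Measure.prod_prod, hμ_single, ← mul_assoc,
      ENNReal.inv_mul_cancel (by simpa using (ENNReal.ofReal_pos.mpr (hπpos z)).ne')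
        ENNReal.ofReal_ne_top, one_mul, hν_apply]
    rw [ENNReal.toReal_ofReal (Finset.sum_nonneg fun w _ => by
      split_ifs <;> first | exact hdR_nonneg w | exact le_rfl), ← hT3 z x y]
    exact Finset.sum_congr rfl fun w _ => by simp only [Set.mem_setOf_eq]
  · intro y0 y1
    show (P {ω : Fin K × (Fin 2 × Fin 2 × (Fin K → Fin 2)) |
      ω.2.1 = y0 ∧ ω.2.2.1 = y1}).toReal = q y0 y1
    have hset2 : {ω : Fin K × (Fin 2 × Fin 2 × (Fin K → Fin 2)) | ω.2.1 = y0 ∧ ω.2.2.1 = y1}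
        = Set.univ ×ˢ {w : Fin 2 × Fin 2 × (Fin K → Fin 2) | w.1 = y0 ∧ w.2.1 = y1} := by
      ext ω; simp [Set.mem_prod]
    rw [hset2, hP_def, Measure.prod_prod, measure_univ, one_mul, hν_apply]
    rw [ENNReal.toReal_ofReal (Finset.sum_nonneg fun w _ => by
      split_ifs <;> first | exact hdR_nonneg w | exact le_rfl), ← hT2 y0 y1]
    exact Finset.sum_congr rfl fun w _ => by simp only [Set.mem_setOf_eq]
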